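/- A PDL formula φ in negation normal form is satisfiable if and only if there exists a Hintikka structure for φ. -/

import Mathlib

mutual
  inductive Fml : Type
    | atom : ℕ → Fml
    | neg  : Fml → Fml
    | and  : Fml → Fml → Fml
    | or   : Fml → Fml → Fml
    | dia  : Prg → Fml → Fml
    | box  : Prg → Fml → Fml
  inductive Prg : Type
    | atom  : ℕ → Prg
    | seq   : Prg → Prg → Prg
    | union : Prg → Prg → Prg
    | star  : Prg → Prg
    | test  : Fml → Prg
end

/-- A PDL model: worlds, relations for atomic programs, valuation. -/
structure Model where
  W : Type
  R : ℕ → W → W → Prop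
  V : ℕ → W → Prop

mutual
  /-- Truth of a formula at a world. -/
  def Model.sat (M : Model) : M.W → Fml → Prop
    | w, .atom p  => M.V p w
    | w, .neg φ   => ¬ M.sat w φ
    | w, .and φ ψ => M.sat w φ ∧ M.sat w ψ
    | w, .or φ ψ  => M.sat w φ ∨ M.sat w ψ
    | w, .dia α φ => ∃ v, M.rel α w v ∧ M.sat v φ
    | w, .box α φ => ∀ v, M.rel α w v → M.sat v φ
  /-- Interpretation of programs as binary relations. -/
  def Model.rel (M : Model) : Prg → M.W → M.W → Prop
    | .atom a, w, v    => M.R a w v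
    | .seq α β, w, v   => ∃ u, M.rel α w u ∧ M.rel β u v
    | .union α β, w, v => M.rel α w v ∨ M.rel β w v
    | .star α, w, v    => Relation.ReflTransGen (fun x y => M.rel α x y) w v
    | .test φ, w, v    => w = v ∧ M.sat w φ
end

mutual
  /-- Negation normal form: negation only immediately before atoms. -/
  inductive IsNNF : Fml → Prop
    | atom (p : ℕ) : IsNNF (.atom p)
    | natom (p : ℕ) : IsNNF (.neg (.atom p))
    | and {φ ψ : Fml} : IsNNF φ → IsNNF ψ → IsNNF (.and φ ψ)
    | or {φ ψ : Fml} : IsNNF φ → IsNNF ψ → IsNNF (.or φ ψ)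
    | dia {α : Prg} {φ : Fml} : IsNNFp α → IsNNF φ → IsNNF (.dia α φ)
    | box {α : Prg} {φ : Fml} : IsNNFp α → IsNNF φ → IsNNF (.box α φ)
  inductive IsNNFp : Prg → Prop
    | atom (a : ℕ) : IsNNFp (.atom a)
    | seq {α β : Prg} : IsNNFp α → IsNNFp β → IsNNFp (.seq α β)
    | union {α β : Prg} : IsNNFp α → IsNNFp β → IsNNFp (.union α β)
    | star {α : Prg} : IsNNFp α → IsNNFp (.star α)
    | test {φ : Fml} : IsNNF φ → IsNNFp (.test φ)
end

/-- The reduction relation ⇝ on diamond formulae. -/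
inductive Red : Fml → Fml → Prop
  | seq (α β : Prg) (χ : Fml) : Red (.dia (.seq α β) χ) (.dia α (.dia β χ))
  | unionL (α β : Prg) (χ : Fml) : Red (.dia (.union α β) χ) (.dia α χ)
  | unionR (α β : Prg) (χ : Fml) : Red (.dia (.union α β) χ) (.dia β χ)
  | star1 (α : Prg) (χ : Fml) : Red (.dia (.star α) χ) χ
  | star2 (α : Prg) (χ : Fml) : Red (.dia (.star α) χ) (.dia α (.dia (.star α) χ))
  | test (ψ χ : Fml) : Red (.dia (.test ψ) χ) χ

/-- Pre φ : formulae of the form ⟨β₁⟩…⟨β_m⟩φ with m ≥ 0. -/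
inductive Pre (φ : Fml) : Fml → Prop
  | base : Pre φ φ
  | dia (α : Prg) {ψ : Fml} : Pre φ ψ → Pre φ (.dia α ψ)

mutual
  /-- Negation normal form of a formula. -/
  def nnf : Fml → Fml
    | .atom p => .atom p
    | .neg φ => nneg φ
    | .and φ ψ => .and (nnf φ) (nnf ψ)
    | .or φ ψ => .or (nnf φ) (nnf ψ)
    | .dia α φ => .dia (nnfp α) (nnf φ)
    | .box α φ => .box (nnfp α) (nnf φ)
  /-- nnf of the negation of a formula. -/
  def nneg : Fml → Fml
    | .atom p => .neg (.atom p)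
    | .neg φ => nnf φ
    | .and φ ψ => .or (nneg φ) (nneg ψ)
    | .or φ ψ => .and (nneg φ) (nneg ψ)
    | .dia α φ => .box (nnfp α) (nneg φ)
    | .box α φ => .dia (nnfp α) (nneg φ)
  def nnfp : Prg → Prg
    | .atom a => .atom a
    | .seq α β => .seq (nnfp α) (nnfp β)
    | .union α β => .union (nnfp α) (nnfp β)
    | .star α => .star (nnfp α)
    | .test φ => .test (nnf φ)
end

/-- A structure: worlds, relations for atomic programs, labelling. -/
structure Str where
  W : Type
  R : ℕ → W → W → Prop
  L : W → Set Fml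

/-- A fulfilling chain for (φ, β, w) in the structure S. -/
def FulfillingChain (S : Str) (φ : Fml) (β : Prg) (w : S.W) : Prop :=
  ∃ (n : ℕ) (ws : ℕ → S.W) (ψs : ℕ → Fml),
    (∀ i ≤ n, Pre φ (ψs i) ∧ ψs i ∈ S.L (ws i)) ∧
    ws 0 = w ∧ ψs 0 = .dia β φ ∧ ψs n = φ ∧ (∀ i < n, ψs i ≠ φ) ∧
    (∀ i < n,
      (∀ (a : ℕ) (χ : Fml), ψs i = Fml.dia (.atom a) χ →
          ψs (i+1) = χ ∧ S.R a (ws i) (ws (i+1))) ∧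
      ((∀ (a : ℕ) (χ : Fml), ψs i ≠ Fml.dia (.atom a) χ) →
          Red (ψs i) (ψs (i+1)) ∧ ws i = ws (i+1)))

/-- Hintikka structure: conditions H1–H6. -/
def Hintikka (S : Str) : Prop :=
  ∀ w : S.W,
    -- H1
    (∀ p : ℕ, Fml.neg (.atom p) ∈ S.L w → Fml.atom p ∉ S.L w) ∧
    -- H2 (α-formulae)
    (∀ φ ψ : Fml, Fml.and φ ψ ∈ S.L w → φ ∈ S.L w ∧ ψ ∈ S.L w) ∧
    (∀ (α β : Prg) (φ : Fml), Fml.box (.union α β) φ ∈ S.L w →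
        Fml.box α φ ∈ S.L w ∧ Fml.box β φ ∈ S.L w) ∧
    (∀ (α : Prg) (φ : Fml), Fml.box (.star α) φ ∈ S.L w →
        φ ∈ S.L w ∧ Fml.box α (.box (.star α) φ) ∈ S.L w) ∧
    (∀ ψ φ : Fml, Fml.dia (.test ψ) φ ∈ S.L w → φ ∈ S.L w ∧ ψ ∈ S.L w) ∧
    (∀ (α β : Prg) (φ : Fml), Fml.dia (.seq α β) φ ∈ S.L w →
        Fml.dia α (.dia β φ) ∈ S.L w) ∧
    (∀ (α β : Prg) (φ : Fml), Fml.box (.seq α β) φ ∈ S.L w →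
        Fml.box α (.box β φ) ∈ S.L w) ∧
    -- H3 (β-formulae)
    (∀ φ ψ : Fml, Fml.or φ ψ ∈ S.L w → φ ∈ S.L w ∨ ψ ∈ S.L w) ∧
    (∀ (α β : Prg) (φ : Fml), Fml.dia (.union α β) φ ∈ S.L w →
        Fml.dia α φ ∈ S.L w ∨ Fml.dia β φ ∈ S.L w) ∧
    (∀ (α : Prg) (φ : Fml), Fml.dia (.star α) φ ∈ S.L w →
        φ ∈ S.L w ∨ Fml.dia α (.dia (.star α) φ) ∈ S.L w) ∧
    (∀ ψ φ : Fml, Fml.box (.test ψ) φ ∈ S.L w → nneg ψ ∈ S.L w ∨ φ ∈ S.L w) ∧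
    -- H4
    (∀ (a : ℕ) (φ : Fml), Fml.dia (.atom a) φ ∈ S.L w →
        ∃ v, S.R a w v ∧ φ ∈ S.L v) ∧
    -- H5
    (∀ (a : ℕ) (φ : Fml), Fml.box (.atom a) φ ∈ S.L w →
        ∀ v, S.R a w v → φ ∈ S.L v) ∧
    -- H6
    (∀ (α : Prg) (φ : Fml), Fml.dia (.star α) φ ∈ S.L w →
        FulfillingChain S φ (.star α) w)


example (M : Model) (w : M.W) (p : ℕ) : M.sat w (.atom p) ↔ M.V p w := by
  simp [Model.sat]

example (M : Model) (w v : M.W) (φ : Fml) : M.rel (.test φ) w v ↔ (w = v ∧ M.sat w φ) := by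
  simp [Model.rel]

mutual
theorem sat_nnf (M : Model) (ψ : Fml) (w : M.W) :
    (M.sat w (nnf ψ) ↔ M.sat w ψ) ∧ (M.sat w (nneg ψ) ↔ ¬ M.sat w ψ) := by
  cases ψ with
  | atom p => simp [Model.sat, nnf, nneg]
  | neg φ =>
      have := sat_nnf M φ w
      simp only [Model.sat, nnf, nneg, this.1, this.2]
      tauto
  | and φ χ =>
      have h1 := sat_nnf M φ w; have h2 := sat_nnf M χ w
      simp only [Model.sat, nnf, nneg, h1.1, h1.2, h2.1, h2.2]
      tauto
  | or φ χ =>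
      have h1 := sat_nnf M φ w; have h2 := sat_nnf M χ w
      simp only [Model.sat, nnf, nneg, h1.1, h1.2, h2.1, h2.2]
      tauto
  | dia α φ =>
      have hr := rel_nnfp M α
      constructor
      · simp only [Model.sat, nnf]
        constructor
        · rintro ⟨v, h1, h2⟩; exact ⟨v, (hr w v).1 h1, (sat_nnf M φ v).1.1 h2⟩
        · rintro ⟨v, h1, h2⟩; exact ⟨v, (hr w v).2 h1, (sat_nnf M φ v).1.2 h2⟩
      · simp only [Model.sat, nnf, nneg]
        constructor
        · rintro h ⟨v, h1, h2⟩
          exact (sat_nnf M φ v).2.1 (h v ((hr w v).2 h1)) h2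
        · intro h v hrel
          exact (sat_nnf M φ v).2.2 (fun hs => h ⟨v, (hr w v).1 hrel, hs⟩)
  | box α φ =>
      have hr := rel_nnfp M α
      constructor
      · simp only [Model.sat, nnf]
        constructor
        · intro h v hrel; exact (sat_nnf M φ v).1.1 (h v ((hr w v).2 hrel))
        · intro h v hrel; exact (sat_nnf M φ v).1.2 (h v ((hr w v).1 hrel))
      · simp only [Model.sat, nnf, nneg]
        constructor
        · rintro ⟨v, h1, h2⟩ hall
          exact (sat_nnf M φ v).2.1 h2 (hall v ((hr w v).1 h1))
        · intro h
          rcases not_forall.1 h with ⟨v, hv⟩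
          rcases Classical.not_imp.1 hv with ⟨h1, h2⟩
          exact ⟨v, (hr w v).2 h1, (sat_nnf M φ v).2.2 h2⟩
  termination_by sizeOf ψ

theorem rel_nnfp (M : Model) (α : Prg) : ∀ u v : M.W, (M.rel (nnfp α) u v ↔ M.rel α u v) := by
  cases α with
  | atom a => intro u v; simp [Model.rel, nnfp]
  | seq α β =>
      intro u v
      have h1 := rel_nnfp M α; have h2 := rel_nnfp M β
      simp only [Model.rel, nnfp]
      constructor
      · rintro ⟨m, a, b⟩; exact ⟨m, (h1 u m).1 a, (h2 m v).1 b⟩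
      · rintro ⟨m, a, b⟩; exact ⟨m, (h1 u m).2 a, (h2 m v).2 b⟩
  | union α β =>
      intro u v
      have h1 := rel_nnfp M α; have h2 := rel_nnfp M β
      simp [Model.rel, nnfp, h1 u v, h2 u v]
  | star α =>
      intro u v
      have h1 := rel_nnfp M α
      simp only [Model.rel, nnfp]
      have : (fun x y : M.W => M.rel (nnfp α) x y) = fun x y => M.rel α x y := by
        funext x y; exact propext (h1 x y)
      rw [this]
  | test φ =>
      intro u v
      have h1 := (sat_nnf M φ u).1
      simp [Model.rel, nnfp, h1]
  termination_by sizeOf α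
end

/-- Subprogram relation (not descending into tests). -/
inductive SubP : Prg → Prg → Prop
  | refl (α : Prg) : SubP α α
  | seqL {γ α β : Prg} : SubP γ α → SubP γ (.seq α β)
  | seqR {γ α β : Prg} : SubP γ β → SubP γ (.seq α β)
  | unionL {γ α β : Prg} : SubP γ α → SubP γ (.union α β)
  | unionR {γ α β : Prg} : SubP γ β → SubP γ (.union α β)
  | star {γ α : Prg} : SubP γ α → SubP γ (.star α)

theorem SubP.trans {γ β α : Prg} (h1 : SubP γ β) (h2 : SubP β α) : SubP γ α := by
  induction h2 with
  | refl => exact h1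
  | seqL _ ih => exact SubP.seqL ih
  | seqR _ ih => exact SubP.seqR ih
  | unionL _ ih => exact SubP.unionL ih
  | unionR _ ih => exact SubP.unionR ih
  | star _ ih => exact SubP.star ih

theorem SubP.sizeOf_le {γ α : Prg} (h : SubP γ α) : sizeOf γ ≤ sizeOf α := by
  induction h with
  | refl => exact le_refl _
  | seqL _ ih => simp only [Prg.seq.sizeOf_spec]; omega
  | seqR _ ih => simp only [Prg.seq.sizeOf_spec]; omega
  | unionL _ ih => simp only [Prg.union.sizeOf_spec]; omega
  | unionR _ ih => simp only [Prg.union.sizeOf_spec]; omega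
  | star _ ih => simp only [Prg.star.sizeOf_spec]; omega

theorem SubP.isNNFp {γ α : Prg} (h : SubP γ α) (hn : IsNNFp α) : IsNNFp γ := by
  induction h with
  | refl => exact hn
  | seqL _ ih => cases hn with | seq a b => exact ih a
  | seqR _ ih => cases hn with | seq a b => exact ih b
  | unionL _ ih => cases hn with | union a b => exact ih a
  | unionR _ ih => cases hn with | union a b => exact ih b
  | star _ ih => cases hn with | star a => exact ih a

theorem Pre.sizeOf_le {φ ξ : Fml} (h : Pre φ ξ) : sizeOf φ ≤ sizeOf ξ := by
  induction h with
  | base => exact le_refl _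
  | dia α _ ih => simp only [Fml.dia.sizeOf_spec]; omega

mutual
theorem nnf_of_isNNF : ∀ {φ : Fml}, IsNNF φ → nnf φ = φ := by
  intro φ h
  cases h with
  | atom p => rfl
  | natom p => rfl
  | and h1 h2 => simp [nnf, nnf_of_isNNF h1, nnf_of_isNNF h2]
  | or h1 h2 => simp [nnf, nnf_of_isNNF h1, nnf_of_isNNF h2]
  | dia hα h1 => simp [nnf, nnf_of_isNNF h1, nnfp_of_isNNFp hα]
  | box hα h1 => simp [nnf, nnf_of_isNNF h1, nnfp_of_isNNFp hα]
theorem nnfp_of_isNNFp : ∀ {α : Prg}, IsNNFp α → nnfp α = α := by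
  intro α h
  cases h with
  | atom a => rfl
  | seq h1 h2 => simp [nnfp, nnfp_of_isNNFp h1, nnfp_of_isNNFp h2]
  | union h1 h2 => simp [nnfp, nnfp_of_isNNFp h1, nnfp_of_isNNFp h2]
  | star h1 => simp [nnfp, nnfp_of_isNNFp h1]
  | test h1 => simp [nnfp, nnf_of_isNNF h1]
end

mutual
theorem isNNF_nnf : ∀ φ : Fml, IsNNF (nnf φ) ∧ IsNNF (nneg φ) := by
  intro φ
  cases φ with
  | atom p => exact ⟨IsNNF.atom p, IsNNF.natom p⟩
  | neg φ => exact ⟨(isNNF_nnf φ).2, (isNNF_nnf φ).1⟩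
  | and φ ψ => exact ⟨IsNNF.and (isNNF_nnf φ).1 (isNNF_nnf ψ).1, IsNNF.or (isNNF_nnf φ).2 (isNNF_nnf ψ).2⟩
  | or φ ψ => exact ⟨IsNNF.or (isNNF_nnf φ).1 (isNNF_nnf ψ).1, IsNNF.and (isNNF_nnf φ).2 (isNNF_nnf ψ).2⟩
  | dia α φ => exact ⟨IsNNF.dia (isNNFp_nnfp α) (isNNF_nnf φ).1, IsNNF.box (isNNFp_nnfp α) (isNNF_nnf φ).2⟩
  | box α φ => exact ⟨IsNNF.box (isNNFp_nnfp α) (isNNF_nnf φ).1, IsNNF.dia (isNNFp_nnfp α) (isNNF_nnf φ).2⟩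
theorem isNNFp_nnfp : ∀ α : Prg, IsNNFp (nnfp α) := by
  intro α
  cases α with
  | atom a => exact IsNNFp.atom a
  | seq α β => exact IsNNFp.seq (isNNFp_nnfp α) (isNNFp_nnfp β)
  | union α β => exact IsNNFp.union (isNNFp_nnfp α) (isNNFp_nnfp β)
  | star α => exact IsNNFp.star (isNNFp_nnfp α)
  | test φ => exact IsNNFp.test (isNNF_nnf φ).1
end

/-- The model induced by a structure. -/
def toModel (S : Str) : Model := ⟨S.W, S.R, fun p w => Fml.atom p ∈ S.L w⟩

theorem boxProp (S : Str) (hH : Hintikka S) (α : Prg)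
    (ht : ∀ θ : Fml, SubP (.test θ) α → ∀ u : S.W, nneg θ ∈ S.L u → ¬ (toModel S).sat u θ) :
    ∀ (ξ : Fml) (w v : S.W), Fml.box α ξ ∈ S.L w → (toModel S).rel α w v → ξ ∈ S.L v := by
  cases α with
  | atom a =>
      intro ξ w v hm hr
      simp only [Model.rel, toModel] at hr
      obtain ⟨-, -, -, -, -, -, -, -, -, -, -, -, H5, -⟩ := hH w
      exact H5 a ξ hm v hr
  | seq α β =>
      intro ξ w v hm hr
      simp only [Model.rel] at hr
      obtain ⟨u, h1, h2⟩ := hr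
      obtain ⟨-, -, -, -, -, -, H2bq, -⟩ := hH w
      have hm' := H2bq α β ξ hm
      have := boxProp S hH α (fun θ hs => ht θ (SubP.seqL hs)) (Fml.box β ξ) w u hm' h1
      exact boxProp S hH β (fun θ hs => ht θ (SubP.seqR hs)) ξ u v this h2
  | union α β =>
      intro ξ w v hm hr
      simp only [Model.rel] at hr
      obtain ⟨-, -, H2bu, -⟩ := hH w
      obtain ⟨ha, hb⟩ := H2bu α β ξ hm
      rcases hr with h | h
      · exact boxProp S hH α (fun θ hs => ht θ (SubP.unionL hs)) ξ w v ha h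
      · exact boxProp S hH β (fun θ hs => ht θ (SubP.unionR hs)) ξ w v hb h
  | star α =>
      intro ξ w v hm hr
      simp only [Model.rel] at hr
      have key : Fml.box (.star α) ξ ∈ S.L v := by
        induction hr with
        | refl => exact hm
        | tail h1 h2 ih =>
            obtain ⟨-, -, -, H2bs, -⟩ := hH _
            exact boxProp S hH α (fun θ hs => ht θ (SubP.star hs)) _ _ _ (H2bs α ξ ih).2 h2
      obtain ⟨-, -, -, H2bs, -⟩ := hH v
      exact (H2bs α ξ key).1
  | test θ0 =>
      intro ξ w v hm hr
      simp only [Model.rel] at hr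
      obtain ⟨rfl, hsat⟩ := hr
      obtain ⟨-, -, -, -, -, -, -, -, -, -, H3bt, -⟩ := hH w
      rcases H3bt θ0 ξ hm with h | h
      · exact absurd hsat (ht θ0 (SubP.refl _) w h)
      · exact h
  termination_by sizeOf α

/-- Formulae of the form ⟨β₁⟩…⟨β_m⟩χ with all βᵢ subprograms of γ. -/
inductive Pref (χ : Fml) (γ : Prg) : Fml → Prop
  | base : Pref χ γ χ
  | dia {β : Prg} {ξ : Fml} : SubP β γ → Pref χ γ ξ → Pref χ γ (.dia β ξ)

theorem Pref.inv {χ : Fml} {γ : Prg} {ξ0 : Fml} (h : Pref χ γ ξ0) :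
    ξ0 = χ ∨ ∃ (β : Prg) (ξ : Fml), SubP β γ ∧ Pref χ γ ξ ∧ ξ0 = .dia β ξ := by
  cases h with
  | base => exact Or.inl rfl
  | dia hs hp => exact Or.inr ⟨_, _, hs, hp, rfl⟩

theorem diaSat (S : Str) (hH : Hintikka S) (α : Prg)
    (ht : ∀ θ : Fml, SubP (.test θ) α → ∀ u : S.W, θ ∈ S.L u → (toModel S).sat u θ) :
    ∀ (χ : Fml), (∀ u : S.W, χ ∈ S.L u → (toModel S).sat u χ) →
    ∀ w : S.W, Fml.dia α χ ∈ S.L w → (toModel S).sat w (.dia α χ) := by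
  cases α with
  | atom a =>
      intro χ hχ w hm
      obtain ⟨-, -, -, -, -, -, -, -, -, -, -, H4, -⟩ := hH w
      obtain ⟨v, hr, hmv⟩ := H4 a χ hm
      simp only [Model.sat, Model.rel, toModel]
      exact ⟨v, hr, hχ v hmv⟩
  | seq α β =>
      intro χ hχ w hm
      obtain ⟨-, -, -, -, -, H2ds, -⟩ := hH w
      have hm' := H2ds α β χ hm
      have hβ : ∀ u : S.W, Fml.dia β χ ∈ S.L u → (toModel S).sat u (.dia β χ) :=
        fun u h => diaSat S hH β (fun θ hs => ht θ (SubP.seqR hs)) χ hχ u h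
      have := diaSat S hH α (fun θ hs => ht θ (SubP.seqL hs)) (.dia β χ) hβ w hm'
      simp only [Model.sat, Model.rel] at this ⊢
      obtain ⟨u, h1, v, h2, h3⟩ := this
      exact ⟨v, ⟨u, h1, h2⟩, h3⟩
  | union α β =>
      intro χ hχ w hm
      obtain ⟨-, -, -, -, -, -, -, -, H3du, -⟩ := hH w
      simp only [Model.sat, Model.rel]
      rcases H3du α β χ hm with h | h
      · have := diaSat S hH α (fun θ hs => ht θ (SubP.unionL hs)) χ hχ w h
        simp only [Model.sat] at this
        obtain ⟨v, h1, h2⟩ := this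
        exact ⟨v, Or.inl h1, h2⟩
      · have := diaSat S hH β (fun θ hs => ht θ (SubP.unionR hs)) χ hχ w h
        simp only [Model.sat] at this
        obtain ⟨v, h1, h2⟩ := this
        exact ⟨v, Or.inr h1, h2⟩
  | test θ0 =>
      intro χ hχ w hm
      obtain ⟨-, -, -, -, H2dt, -⟩ := hH w
      obtain ⟨h1, h2⟩ := H2dt θ0 χ hm
      simp only [Model.sat, Model.rel]
      exact ⟨w, ⟨rfl, ht θ0 (SubP.refl _) w h2⟩, hχ w h1⟩
  | star α =>
      intro χ hχ w hm
      obtain ⟨-, -, -, -, -, -, -, -, -, -, -, -, -, H6⟩ := hH w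
      obtain ⟨n, ws, ψs, hlab, hw0, hp0, hpn, hne, hstep⟩ := H6 α χ hm
      -- the prefix invariant
      have hpref : ∀ i, i ≤ n → Pref χ (.star α) (ψs i) := by
        intro i
        induction i with
        | zero => intro _; rw [hp0]; exact Pref.dia (SubP.refl _) Pref.base
        | succ i ih =>
            intro hle
            have hi : i < n := by omega
            rcases (ih (by omega)).inv with heq | ⟨β, ξ, hsub, hpξ, heq⟩
            · exact absurd heq (hne i hi)
            cases β with
            | atom a =>
                obtain ⟨h1, -⟩ := (hstep i hi).1 a ξ heq
                rw [h1]; exact hpξ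
            | seq β1 β2 =>
                have hna : ∀ (a : ℕ) (χ' : Fml), ψs i ≠ Fml.dia (.atom a) χ' := by
                  intro a χ' hc; rw [heq] at hc; injection hc with e1 e2; cases e1
                have hr := ((hstep i hi).2 hna).1
                rw [heq] at hr
                generalize hg : ψs (i+1) = ψnext at hr ⊢
                cases hr with
                | seq =>
                    exact Pref.dia (SubP.trans (SubP.seqL (SubP.refl _)) hsub)
                      (Pref.dia (SubP.trans (SubP.seqR (SubP.refl _)) hsub) hpξ)
            | union β1 β2 =>
                have hna : ∀ (a : ℕ) (χ' : Fml), ψs i ≠ Fml.dia (.atom a) χ' := by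
                  intro a χ' hc; rw [heq] at hc; injection hc with e1 e2; cases e1
                have hr := ((hstep i hi).2 hna).1
                rw [heq] at hr
                generalize hg : ψs (i+1) = ψnext at hr ⊢
                cases hr with
                | unionL => exact Pref.dia (SubP.trans (SubP.unionL (SubP.refl _)) hsub) hpξ
                | unionR => exact Pref.dia (SubP.trans (SubP.unionR (SubP.refl _)) hsub) hpξ
            | star β0 =>
                have hna : ∀ (a : ℕ) (χ' : Fml), ψs i ≠ Fml.dia (.atom a) χ' := by
                  intro a χ' hc; rw [heq] at hc; injection hc with e1 e2; cases e1
                have hr := ((hstep i hi).2 hna).1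
                rw [heq] at hr
                generalize hg : ψs (i+1) = ψnext at hr ⊢
                cases hr with
                | star1 => exact hpξ
                | star2 =>
                    exact Pref.dia (SubP.trans (SubP.star (SubP.refl _)) hsub)
                      (Pref.dia hsub hpξ)
            | test θ =>
                have hna : ∀ (a : ℕ) (χ' : Fml), ψs i ≠ Fml.dia (.atom a) χ' := by
                  intro a χ' hc; rw [heq] at hc; injection hc with e1 e2; cases e1
                have hr := ((hstep i hi).2 hna).1
                rw [heq] at hr
                generalize hg : ψs (i+1) = ψnext at hr ⊢
                cases hr with
                | test => exact hpξ
      -- downward truth along the chain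
      have hsat : ∀ k, k ≤ n → (toModel S).sat (ws (n - k)) (ψs (n - k)) := by
        intro k
        induction k with
        | zero =>
            intro _
            simp only [Nat.sub_zero]
            rw [hpn]
            have := (hlab n le_rfl).2
            rw [hpn] at this
            exact hχ (ws n) this
        | succ k ih =>
            intro hk
            have hi : n - (k+1) < n := by omega
            have hnext : n - k = (n - (k+1)) + 1 := by omega
            have hs := ih (by omega)
            rw [hnext] at hs
            set i := n - (k+1) with hidef
            rcases (hpref i (by omega)).inv with heq | ⟨β, ξ, hsub, hpξ, heq⟩
            · exact absurd heq (hne i hi)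
            rw [heq]
            cases β with
            | atom a =>
                obtain ⟨h1, h2⟩ := (hstep i hi).1 a ξ heq
                simp only [Model.sat, Model.rel, toModel]
                refine ⟨ws (i+1), h2, ?_⟩
                rw [h1] at hs
                exact hs
            | seq β1 β2 =>
                have hna : ∀ (a : ℕ) (χ' : Fml), ψs i ≠ Fml.dia (.atom a) χ' := by
                  intro a χ' hc; rw [heq] at hc; injection hc with e1 e2; cases e1
                obtain ⟨hr, hweq⟩ := (hstep i hi).2 hna
                rw [heq] at hr
                rw [← hweq] at hs
                generalize hg : ψs (i+1) = ψnext at hr hs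
                cases hr with
                | seq =>
                    simp only [Model.sat, Model.rel] at hs ⊢
                    obtain ⟨u, h1, v, h2, h3⟩ := hs
                    exact ⟨v, ⟨u, h1, h2⟩, h3⟩
            | union β1 β2 =>
                have hna : ∀ (a : ℕ) (χ' : Fml), ψs i ≠ Fml.dia (.atom a) χ' := by
                  intro a χ' hc; rw [heq] at hc; injection hc with e1 e2; cases e1
                obtain ⟨hr, hweq⟩ := (hstep i hi).2 hna
                rw [heq] at hr
                rw [← hweq] at hs
                generalize hg : ψs (i+1) = ψnext at hr hs
                cases hr with
                | unionL =>
                    simp only [Model.sat, Model.rel] at hs ⊢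
                    obtain ⟨v, h1, h2⟩ := hs
                    exact ⟨v, Or.inl h1, h2⟩
                | unionR =>
                    simp only [Model.sat, Model.rel] at hs ⊢
                    obtain ⟨v, h1, h2⟩ := hs
                    exact ⟨v, Or.inr h1, h2⟩
            | star β0 =>
                have hna : ∀ (a : ℕ) (χ' : Fml), ψs i ≠ Fml.dia (.atom a) χ' := by
                  intro a χ' hc; rw [heq] at hc; injection hc with e1 e2; cases e1
                obtain ⟨hr, hweq⟩ := (hstep i hi).2 hna
                rw [heq] at hr
                rw [← hweq] at hs
                generalize hg : ψs (i+1) = ψnext at hr hs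
                cases hr with
                | star1 =>
                    simp only [Model.sat, Model.rel] at hs ⊢
                    exact ⟨ws i, Relation.ReflTransGen.refl, hs⟩
                | star2 =>
                    simp only [Model.sat, Model.rel] at hs ⊢
                    obtain ⟨u, h1, v, h2, h3⟩ := hs
                    exact ⟨v, Relation.ReflTransGen.head h1 h2, h3⟩
            | test θ =>
                have hna : ∀ (a : ℕ) (χ' : Fml), ψs i ≠ Fml.dia (.atom a) χ' := by
                  intro a χ' hc; rw [heq] at hc; injection hc with e1 e2; cases e1
                obtain ⟨hr, hweq⟩ := (hstep i hi).2 hna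
                rw [heq] at hr
                rw [← hweq] at hs
                generalize hg : ψs (i+1) = ψnext at hr hs
                cases hr with
                | test =>
                    have hmem : Fml.dia (.test θ) ξ ∈ S.L (ws i) := by
                      have := (hlab i (by omega)).2; rw [heq] at this; exact this
                    obtain ⟨-, -, -, -, H2dt, -⟩ := hH (ws i)
                    have hθ := (H2dt θ ξ hmem).2
                    simp only [Model.sat, Model.rel] at hs ⊢
                    exact ⟨ws i, ⟨rfl, ht θ hsub (ws i) hθ⟩, hs⟩
      have := hsat n le_rfl
      simp only [Nat.sub_self] at this
      rw [hw0, hp0] at this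
      exact this
  termination_by sizeOf α

theorem sizeOf_pos_fml (ψ : Fml) : 0 < sizeOf ψ := by
  cases ψ <;> simp +arith +decide

theorem truth (S : Str) (hH : Hintikka S) :
    ∀ (n : ℕ) (ψ : Fml), sizeOf ψ ≤ n → IsNNF ψ →
      (∀ w : S.W, ψ ∈ S.L w → (toModel S).sat w ψ) ∧
      (∀ w : S.W, nneg ψ ∈ S.L w → ¬ (toModel S).sat w ψ) := by
  intro n
  induction n with
  | zero =>
      intro ψ hsz
      exact absurd hsz (by have := sizeOf_pos_fml ψ; omega)
  | succ n IH =>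
    intro ψ hsz hnnf
    cases hnnf with
    | atom p =>
        constructor
        · intro w hm
          simpa only [Model.sat, toModel] using hm
        · intro w hm hsat
          simp only [nneg] at hm
          simp only [Model.sat, toModel] at hsat
          exact (hH w).1 p hm hsat
    | natom p =>
        constructor
        · intro w hm
          have := (hH w).1 p hm
          simp only [Model.sat, toModel]
          exact this
        · intro w hm hsat
          simp only [nneg, nnf] at hm
          simp only [Model.sat, toModel] at hsat
          exact hsat hm
    | and h1 h2 =>
        rename_i φ χ
        simp only [Fml.and.sizeOf_spec] at hsz
        have IH1 := IH φ (by omega) h1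
        have IH2 := IH χ (by omega) h2
        constructor
        · intro w hm
          obtain ⟨-, H2a, -⟩ := hH w
          obtain ⟨ha, hb⟩ := H2a φ χ hm
          simp only [Model.sat]
          exact ⟨IH1.1 w ha, IH2.1 w hb⟩
        · intro w hm hsat
          simp only [nneg] at hm
          obtain ⟨-, -, -, -, -, -, -, H3o, -⟩ := hH w
          simp only [Model.sat] at hsat
          rcases H3o _ _ hm with h | h
          · exact IH1.2 w h hsat.1
          · exact IH2.2 w h hsat.2
    | or h1 h2 =>
        rename_i φ χ
        simp only [Fml.or.sizeOf_spec] at hsz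
        have IH1 := IH φ (by omega) h1
        have IH2 := IH χ (by omega) h2
        constructor
        · intro w hm
          obtain ⟨-, -, -, -, -, -, -, H3o, -⟩ := hH w
          simp only [Model.sat]
          rcases H3o φ χ hm with h | h
          · exact Or.inl (IH1.1 w h)
          · exact Or.inr (IH2.1 w h)
        · intro w hm hsat
          simp only [nneg] at hm
          obtain ⟨-, H2a, -⟩ := hH w
          obtain ⟨ha, hb⟩ := H2a _ _ hm
          simp only [Model.sat] at hsat
          rcases hsat with h | h
          · exact IH1.2 w ha h
          · exact IH2.2 w hb h
    | dia hα h1 =>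
        rename_i α φ
        simp only [Fml.dia.sizeOf_spec] at hsz
        have IHφ := IH φ (by omega) h1
        have ht : ∀ θ : Fml, SubP (.test θ) α → ∀ u : S.W, θ ∈ S.L u → (toModel S).sat u θ := by
          intro θ hsub u hθ
          have hsz' : sizeOf θ ≤ n := by
            have := hsub.sizeOf_le
            simp only [Prg.test.sizeOf_spec] at this
            omega
          have hθn : IsNNF θ := by cases hsub.isNNFp hα with | test h => exact h
          exact (IH θ hsz' hθn).1 u hθ
        have ht2 : ∀ θ : Fml, SubP (.test θ) α → ∀ u : S.W, nneg θ ∈ S.L u → ¬ (toModel S).sat u θ := by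
          intro θ hsub u hθ
          have hsz' : sizeOf θ ≤ n := by
            have := hsub.sizeOf_le
            simp only [Prg.test.sizeOf_spec] at this
            omega
          have hθn : IsNNF θ := by cases hsub.isNNFp hα with | test h => exact h
          exact (IH θ hsz' hθn).2 u hθ
        constructor
        · intro w hm
          exact diaSat S hH α ht φ (fun u h => IHφ.1 u h) w hm
        · intro w hm hsat
          simp only [nneg, nnfp_of_isNNFp hα] at hm
          simp only [Model.sat] at hsat
          obtain ⟨v, hrel, hsφ⟩ := hsat
          exact IHφ.2 v (boxProp S hH α ht2 (nneg φ) w v hm hrel) hsφ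
    | box hα h1 =>
        rename_i α φ
        simp only [Fml.box.sizeOf_spec] at hsz
        have IHφ := IH φ (by omega) h1
        have ht : ∀ θ : Fml, SubP (.test θ) α → ∀ u : S.W, θ ∈ S.L u → (toModel S).sat u θ := by
          intro θ hsub u hθ
          have hsz' : sizeOf θ ≤ n := by
            have := hsub.sizeOf_le
            simp only [Prg.test.sizeOf_spec] at this
            omega
          have hθn : IsNNF θ := by cases hsub.isNNFp hα with | test h => exact h
          exact (IH θ hsz' hθn).1 u hθ
        have ht2 : ∀ θ : Fml, SubP (.test θ) α → ∀ u : S.W, nneg θ ∈ S.L u → ¬ (toModel S).sat u θ := by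
          intro θ hsub u hθ
          have hsz' : sizeOf θ ≤ n := by
            have := hsub.sizeOf_le
            simp only [Prg.test.sizeOf_spec] at this
            omega
          have hθn : IsNNF θ := by cases hsub.isNNFp hα with | test h => exact h
          exact (IH θ hsz' hθn).2 u hθ
        constructor
        · intro w hm
          simp only [Model.sat]
          intro v hrel
          exact IHφ.1 v (boxProp S hH α ht2 φ w v hm hrel)
        · intro w hm hsat
          simp only [nneg, nnfp_of_isNNFp hα] at hm
          have hχ' : ∀ u : S.W, nneg φ ∈ S.L u → (toModel S).sat u (nneg φ) :=
            fun u h => (sat_nnf (toModel S) φ u).2.2 (IHφ.2 u h)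
          have := diaSat S hH α ht (nneg φ) hχ' w hm
          simp only [Model.sat] at this hsat
          obtain ⟨v, hrel, hsneg⟩ := this
          exact (sat_nnf (toModel S) φ v).2.1 hsneg (hsat v hrel)

/-- The structure induced by a model (labels = true formulae). -/
def toStr (M : Model) : Str := ⟨M.W, M.R, fun w => {ψ | M.sat w ψ}⟩

theorem mem_toStr {M : Model} {w : M.W} {ψ : Fml} : ψ ∈ (toStr M).L w ↔ M.sat w ψ := Iff.rfl

/-- A chain segment satisfying all fulfilling-chain conditions. -/
def Seg (S : Str) (φ : Fml) (w : S.W) (ψ0 : Fml) (v : S.W) (ψ1 : Fml) : Prop :=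
  ∃ (n : ℕ) (ws : ℕ → S.W) (ψs : ℕ → Fml),
    ws 0 = w ∧ ψs 0 = ψ0 ∧ ws n = v ∧ ψs n = ψ1 ∧
    (∀ i ≤ n, Pre φ (ψs i) ∧ ψs i ∈ S.L (ws i)) ∧
    (∀ i < n, ∃ (β : Prg) (ξ : Fml), ψs i = Fml.dia β ξ ∧ Pre φ ξ) ∧
    (∀ i < n,
      (∀ (a : ℕ) (χ : Fml), ψs i = Fml.dia (.atom a) χ → ψs (i+1) = χ ∧ S.R a (ws i) (ws (i+1))) ∧
      ((∀ (a : ℕ) (χ : Fml), ψs i ≠ Fml.dia (.atom a) χ) → Red (ψs i) (ψs (i+1)) ∧ ws i = ws (i+1)))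

theorem seg_trans {S : Str} {φ : Fml} {w v u : S.W} {ψ0 ψ1 ψ2 : Fml}
    (h1 : Seg S φ w ψ0 v ψ1) (h2 : Seg S φ v ψ1 u ψ2) : Seg S φ w ψ0 u ψ2 := by
  obtain ⟨n1, ws1, ψs1, e1, e2, e3, e4, hlab1, hdia1, hstep1⟩ := h1
  obtain ⟨n2, ws2, ψs2, f1, f2, f3, f4, hlab2, hdia2, hstep2⟩ := h2
  have keyw : ∀ j, n1 ≤ j → (if j ≤ n1 then ws1 j else ws2 (j - n1)) = ws2 (j - n1) := by
    intro j hj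
    by_cases hj' : j ≤ n1
    · have : j = n1 := by omega
      subst this
      rw [if_pos hj', Nat.sub_self, e3, ← f1]
    · rw [if_neg hj']
  have keyp : ∀ j, n1 ≤ j → (if j ≤ n1 then ψs1 j else ψs2 (j - n1)) = ψs2 (j - n1) := by
    intro j hj
    by_cases hj' : j ≤ n1
    · have : j = n1 := by omega
      subst this
      rw [if_pos hj', Nat.sub_self, e4, ← f2]
    · rw [if_neg hj']
  refine ⟨n1 + n2, fun i => if i ≤ n1 then ws1 i else ws2 (i - n1),
    fun i => if i ≤ n1 then ψs1 i else ψs2 (i - n1), ?_, ?_, ?_, ?_, ?_, ?_, ?_⟩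
  · simp [e1]
  · simp [e2]
  · dsimp only
    rw [keyw (n1+n2) (by omega), show n1 + n2 - n1 = n2 by omega]
    exact f3
  · dsimp only
    rw [keyp (n1+n2) (by omega), show n1 + n2 - n1 = n2 by omega]
    exact f4
  · intro i hi
    dsimp only
    by_cases h : i ≤ n1
    · simp only [if_pos h]
      exact hlab1 i h
    · simp only [if_neg h]
      exact hlab2 (i - n1) (by omega)
  · intro i hi
    dsimp only
    by_cases h : i < n1
    · rw [if_pos (by omega : i ≤ n1)]
      exact hdia1 i h
    · rw [keyp i (by omega)]
      exact hdia2 (i - n1) (by omega)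
  · intro i hi
    dsimp only
    by_cases h : i < n1
    · simp only [if_pos (show i ≤ n1 by omega), if_pos (show i + 1 ≤ n1 by omega)]
      exact hstep1 i h
    · rw [keyw i (by omega), keyp i (by omega), keyw (i+1) (by omega), keyp (i+1) (by omega),
        show i + 1 - n1 = (i - n1) + 1 by omega]
      exact hstep2 (i - n1) (by omega)

theorem seg_single {S : Str} {φ : Fml} {w v : S.W} {ψ0 ψ1 : Fml}
    (hp0 : Pre φ ψ0) (hp1 : Pre φ ψ1)
    (hm0 : ψ0 ∈ S.L w) (hm1 : ψ1 ∈ S.L v)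
    (hdia : ∃ (β : Prg) (ξ : Fml), ψ0 = Fml.dia β ξ ∧ Pre φ ξ)
    (hstep : (∀ (a : ℕ) (χ : Fml), ψ0 = Fml.dia (.atom a) χ → ψ1 = χ ∧ S.R a w v) ∧
             ((∀ (a : ℕ) (χ : Fml), ψ0 ≠ Fml.dia (.atom a) χ) → Red ψ0 ψ1 ∧ w = v)) :
    Seg S φ w ψ0 v ψ1 := by
  refine ⟨1, fun i => if i = 0 then w else v, fun i => if i = 0 then ψ0 else ψ1,
    by simp, by simp, by simp, by simp, ?_, ?_, ?_⟩
  · intro i hi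
    interval_cases i
    · simpa using ⟨hp0, hm0⟩
    · simpa using ⟨hp1, hm1⟩
  · intro i hi
    interval_cases i
    simpa using hdia
  · intro i hi
    interval_cases i
    simpa using hstep

theorem chain_exists (M : Model) (φ : Fml) (α : Prg) :
    ∀ (w v : M.W) (χ : Fml), M.rel α w v → Pre φ χ → M.sat v χ →
      Seg (toStr M) φ w (.dia α χ) v χ := by
  cases α with
  | atom a =>
      intro w v χ hr hpre hsat
      simp only [Model.rel] at hr
      refine seg_single (Pre.dia _ hpre) hpre ?_ hsat ⟨_, _, rfl, hpre⟩ ?_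
      · show M.sat w (.dia (.atom a) χ)
        simp only [Model.sat, Model.rel]
        exact ⟨v, hr, hsat⟩
      · constructor
        · intro a' χ' heq
          injection heq with e1 e2
          injection e1 with e3
          subst e3
          rw [← e2]
          exact ⟨rfl, hr⟩
        · intro hne
          exact absurd rfl (hne a χ)
  | seq α β =>
      intro w v χ hr hpre hsat
      simp only [Model.rel] at hr
      obtain ⟨u, hr1, hr2⟩ := hr
      have satu : M.sat u (.dia β χ) := by
        simp only [Model.sat]
        exact ⟨v, hr2, hsat⟩
      have s1 := chain_exists M φ α w u (.dia β χ) hr1 (Pre.dia _ hpre) satu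
      have s2 := chain_exists M φ β u v χ hr2 hpre hsat
      refine seg_trans (seg_trans (seg_single (Pre.dia _ hpre) (Pre.dia _ (Pre.dia _ hpre))
        ?_ ?_ ⟨_, _, rfl, hpre⟩ ?_) s1) s2
      · show M.sat w (.dia (.seq α β) χ)
        simp only [Model.sat, Model.rel]
        exact ⟨v, ⟨u, hr1, hr2⟩, hsat⟩
      · show M.sat w (.dia α (.dia β χ))
        simp only [Model.sat]
        exact ⟨u, hr1, satu⟩
      · constructor
        · intro a' χ' heq
          injection heq with e1 e2
          exact Prg.noConfusion e1
        · intro _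
          exact ⟨Red.seq α β χ, rfl⟩
  | union α β =>
      intro w v χ hr hpre hsat
      simp only [Model.rel] at hr
      have satw : M.sat w (.dia (.union α β) χ) := by
        simp only [Model.sat, Model.rel]
        exact ⟨v, hr, hsat⟩
      rcases hr with h | h
      · have s1 := chain_exists M φ α w v χ h hpre hsat
        refine seg_trans (seg_single (Pre.dia _ hpre) (Pre.dia _ hpre) satw
          ?_ ⟨_, _, rfl, hpre⟩ ?_) s1
        · show M.sat w (.dia α χ)
          simp only [Model.sat]
          exact ⟨v, h, hsat⟩
        · constructor
          · intro a' χ' heq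
            injection heq with e1 e2
            exact Prg.noConfusion e1
          · intro _
            exact ⟨Red.unionL α β χ, rfl⟩
      · have s1 := chain_exists M φ β w v χ h hpre hsat
        refine seg_trans (seg_single (Pre.dia _ hpre) (Pre.dia _ hpre) satw
          ?_ ⟨_, _, rfl, hpre⟩ ?_) s1
        · show M.sat w (.dia β χ)
          simp only [Model.sat]
          exact ⟨v, h, hsat⟩
        · constructor
          · intro a' χ' heq
            injection heq with e1 e2
            exact Prg.noConfusion e1
          · intro _
            exact ⟨Red.unionR α β χ, rfl⟩
  | star α =>
      intro w v χ hr hpre hsat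
      simp only [Model.rel] at hr
      induction hr using Relation.ReflTransGen.head_induction_on with
      | refl =>
          refine seg_single (Pre.dia _ hpre) hpre ?_ hsat ⟨_, _, rfl, hpre⟩ ?_
          · show M.sat v (.dia (.star α) χ)
            simp only [Model.sat, Model.rel]
            exact ⟨v, Relation.ReflTransGen.refl, hsat⟩
          · constructor
            · intro a' χ' heq
              injection heq with e1 e2
              exact Prg.noConfusion e1
            · intro _
              exact ⟨Red.star1 α χ, rfl⟩
      | head h1 h2 ih =>
          rename_i w' c
          have satc : M.sat c (.dia (.star α) χ) := by
            simp only [Model.sat, Model.rel]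
            exact ⟨v, h2, hsat⟩
          have sA := chain_exists M φ α w' c (.dia (.star α) χ) h1 (Pre.dia _ hpre) satc
          refine seg_trans (seg_trans (seg_single (Pre.dia _ hpre)
            (Pre.dia _ (Pre.dia _ hpre)) ?_ ?_ ⟨_, _, rfl, hpre⟩ ?_) sA) ih
          · show M.sat w' (.dia (.star α) χ)
            simp only [Model.sat, Model.rel]
            exact ⟨v, Relation.ReflTransGen.head h1 h2, hsat⟩
          · show M.sat w' (.dia α (.dia (.star α) χ))
            simp only [Model.sat]
            exact ⟨c, h1, satc⟩
          · constructor
            · intro a' χ' heq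
              injection heq with e1 e2
              exact Prg.noConfusion e1
            · intro _
              exact ⟨Red.star2 α χ, rfl⟩
  | test θ =>
      intro w v χ hr hpre hsat
      simp only [Model.rel] at hr
      obtain ⟨rfl, hθ⟩ := hr
      refine seg_single (Pre.dia _ hpre) hpre ?_ hsat ⟨_, _, rfl, hpre⟩ ?_
      · show M.sat w (.dia (.test θ) χ)
        simp only [Model.sat, Model.rel]
        exact ⟨w, ⟨rfl, hθ⟩, hsat⟩
      · constructor
        · intro a' χ' heq
          injection heq with e1 e2
          exact Prg.noConfusion e1
        · intro _
          exact ⟨Red.test θ χ, rfl⟩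
  termination_by sizeOf α

theorem hintikka_toStr (M : Model) : Hintikka (toStr M) := by
  intro w
  refine ⟨?_, ?_, ?_, ?_, ?_, ?_, ?_, ?_, ?_, ?_, ?_, ?_, ?_, ?_⟩
  · intro p h
    have h' : M.sat w (.neg (.atom p)) := h
    simp only [Model.sat] at h'
    intro hc
    exact h' hc
  · intro φ ψ h
    have h' : M.sat w (.and φ ψ) := h
    simp only [Model.sat] at h'
    exact h'
  · intro α β ξ h
    have h' : M.sat w (.box (.union α β) ξ) := h
    simp only [Model.sat, Model.rel] at h'
    constructor
    · show M.sat w (.box α ξ)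
      simp only [Model.sat]
      intro v hr
      exact h' v (Or.inl hr)
    · show M.sat w (.box β ξ)
      simp only [Model.sat]
      intro v hr
      exact h' v (Or.inr hr)
  · intro α ξ h
    have h' : M.sat w (.box (.star α) ξ) := h
    simp only [Model.sat, Model.rel] at h'
    constructor
    · exact h' w Relation.ReflTransGen.refl
    · show M.sat w (.box α (.box (.star α) ξ))
      simp only [Model.sat, Model.rel]
      intro v hr v' hr'
      exact h' v' (Relation.ReflTransGen.head hr hr')
  · intro ψ ξ h
    have h' : M.sat w (.dia (.test ψ) ξ) := h
    simp only [Model.sat, Model.rel] at h'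
    obtain ⟨v, ⟨heq, hψ⟩, hξ⟩ := h'
    subst heq
    exact ⟨hξ, hψ⟩
  · intro α β ξ h
    have h' : M.sat w (.dia (.seq α β) ξ) := h
    simp only [Model.sat, Model.rel] at h'
    obtain ⟨v, ⟨u, r1, r2⟩, hs⟩ := h'
    show M.sat w (.dia α (.dia β ξ))
    simp only [Model.sat]
    exact ⟨u, r1, v, r2, hs⟩
  · intro α β ξ h
    have h' : M.sat w (.box (.seq α β) ξ) := h
    simp only [Model.sat, Model.rel] at h'
    show M.sat w (.box α (.box β ξ))
    simp only [Model.sat]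
    intro v r1 v' r2
    exact h' v' ⟨v, r1, r2⟩
  · intro φ ψ h
    have h' : M.sat w (.or φ ψ) := h
    simp only [Model.sat] at h'
    exact h'
  · intro α β ξ h
    have h' : M.sat w (.dia (.union α β) ξ) := h
    simp only [Model.sat, Model.rel] at h'
    obtain ⟨v, hr, hs⟩ := h'
    rcases hr with hr | hr
    · refine Or.inl ?_
      show M.sat w (.dia α ξ)
      simp only [Model.sat]
      exact ⟨v, hr, hs⟩
    · refine Or.inr ?_
      show M.sat w (.dia β ξ)
      simp only [Model.sat]
      exact ⟨v, hr, hs⟩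
  · intro α ξ h
    have h' : M.sat w (.dia (.star α) ξ) := h
    simp only [Model.sat, Model.rel] at h'
    obtain ⟨v, hrtg, hs⟩ := h'
    rcases Relation.ReflTransGen.cases_head hrtg with heq | ⟨c, hc, hcv⟩
    · subst heq
      exact Or.inl hs
    · refine Or.inr ?_
      show M.sat w (.dia α (.dia (.star α) ξ))
      simp only [Model.sat, Model.rel]
      exact ⟨c, hc, v, hcv, hs⟩
  · intro ψ ξ h
    have h' : M.sat w (.box (.test ψ) ξ) := h
    simp only [Model.sat, Model.rel] at h'
    by_cases hs : M.sat w ψ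
    · exact Or.inr (h' w ⟨rfl, hs⟩)
    · exact Or.inl ((sat_nnf M ψ w).2.2 hs)
  · intro a ξ h
    have h' : M.sat w (.dia (.atom a) ξ) := h
    simp only [Model.sat, Model.rel] at h'
    obtain ⟨v, hr, hs⟩ := h'
    exact ⟨v, hr, hs⟩
  · intro a ξ h v hr
    have h' : M.sat w (.box (.atom a) ξ) := h
    simp only [Model.sat] at h'
    exact h' v (by simp only [Model.rel]; exact hr)
  · intro α ξ h
    have h' : M.sat w (.dia (.star α) ξ) := h
    simp only [Model.sat] at h'
    obtain ⟨v, hrtg, hs⟩ := h'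
    have seg := chain_exists M ξ (.star α) w v ξ hrtg Pre.base hs
    obtain ⟨n, ws, ψs, e1, e2, e3, e4, hlab, hdia, hstep⟩ := seg
    refine ⟨n, ws, ψs, hlab, e1, e2, e4, ?_, hstep⟩
    intro i hi heq
    obtain ⟨β, ξ', hd, hp⟩ := hdia i hi
    rw [hd] at heq
    have h1 := hp.sizeOf_le
    have h2 := congrArg sizeOf heq
    simp only [Fml.dia.sizeOf_spec] at h2
    have := sizeOf_pos_fml ξ'
    omega


theorem satisfiable_iff_hintikka (φ : Fml) (hnnf : IsNNF φ) :
    (∃ (M : Model) (w : M.W), M.sat w φ) ↔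
    (∃ S : Str, Hintikka S ∧ ∃ v : S.W, φ ∈ S.L v) := by
  constructor
  · rintro ⟨M, w, hsat⟩
    exact ⟨toStr M, hintikka_toStr M, w, hsat⟩
  · rintro ⟨S, hH, v, hmem⟩
    exact ⟨toModel S, v, (truth S hH (sizeOf φ) φ le_rfl hnnf).1 v hmem⟩
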